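/- arXiv:2009.03270 — 2 statements merged into one kernel-verified Lean document; each statement's English description precedes it below -/
import Mathlib

section
/- Let (U,V) be a cotorsion pair in an abelian category A, and let 0 → M′ → M → M″ → 0 be a degreewise short exact sequence of complexes with every term of every complex in V. If M′ and M″ are acyclic with all cycle objects in V, then M is acyclic with all cycle objects in V. -/
open CategoryTheory Category Limits

universe v u

/-- `Ext¹(X,Y) = 0`, encoded as: every short exact sequence `0 → Y → E → X → 0` splits. -/
def Ext1Vanishes {A : Type u} [Category.{v} A] [Abelian A] (X Y : A) : Prop :=
  ∀ (E : A) (f : Y ⟶ E) (g : E ⟶ X) (w : f ≫ g = 0),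
    (ShortComplex.mk f g w).ShortExact → ∃ s : X ⟶ E, s ≫ g = 𝟙 X

/-- `(U,V)` is a cotorsion pair in the abelian category `A`. -/
def IsCotorsionPair {A : Type u} [Category.{v} A] [Abelian A] (U V : Set A) : Prop :=
  (∀ X, X ∈ U ↔ ∀ Y ∈ V, Ext1Vanishes X Y) ∧
  (∀ Y, Y ∈ V ↔ ∀ X ∈ U, Ext1Vanishes X Y)


/-- A chain complex is acyclic if all its homology vanishes. -/
def IsAcyclicComplex {A : Type u} [Category.{v} A] [Abelian A]
    (K : ChainComplex A ℤ) : Prop :=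
  ∀ n : ℤ, K.ExactAt n

open CategoryTheory.Abelian in
open scoped Pseudoelement in
/-- The class `{Y | Ext¹(X,Y) = 0}` is closed under extensions. -/
lemma ext1Vanishes_of_extension {A : Type u} [Category.{v} A] [Abelian A]
    {X Y' Y Y'' : A} (i : Y' ⟶ Y) (p : Y ⟶ Y'') (wip : i ≫ p = 0)
    (hYp : (ShortComplex.mk i p wip).ShortExact)
    (h' : Ext1Vanishes X Y') (h'' : Ext1Vanishes X Y'') : Ext1Vanishes X Y := by
  intro E f g wfg hfg
  have mono_i : Mono i := hYp.mono_f
  have epi_p : Epi p := hYp.epi_g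
  have mono_f : Mono f := hfg.mono_f
  have epi_g : Epi g := hfg.epi_g
  -- `Q = E / Y'`
  set π : E ⟶ cokernel (i ≫ f) := cokernel.π (i ≫ f) with hπ
  have hifπ : (i ≫ f) ≫ π = 0 := cokernel.condition _
  have hS₂exact : (ShortComplex.mk (i ≫ f) π hifπ).Exact :=
    ShortComplex.exact_of_g_is_cokernel _ (cokernelIsCokernel (i ≫ f))
  -- the map `Y'' ⟶ Q`
  obtain ⟨ybar, hybar⟩ := CokernelCofork.IsColimit.desc' hYp.gIsCokernel (f ≫ π)
    (by rw [← Category.assoc]; exact hifπ)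
  dsimp at hybar
  -- the map `Q ⟶ X`
  have hifg : (i ≫ f) ≫ g = 0 := by rw [Category.assoc, wfg, comp_zero]
  set gbar : cokernel (i ≫ f) ⟶ X := cokernel.desc (i ≫ f) g hifg with hgbar
  have hπg : π ≫ gbar = g := cokernel.π_desc _ _ _
  have hyg : ybar ≫ gbar = 0 := by
    rw [← cancel_epi p, ← Category.assoc, hybar, Category.assoc, hπg, wfg, comp_zero]
  -- `0 → Y'' → Q → X → 0` is short exact
  have mono_ybar : Mono ybar := by
    apply Pseudoelement.mono_of_zero_of_map_zero
    intro a ha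
    obtain ⟨y, hy⟩ := Pseudoelement.pseudo_surjective_of_epi p a
    have h1 : Pseudoelement.pseudoApply π (Pseudoelement.pseudoApply f y) = 0 := by
      rw [← Pseudoelement.comp_apply, ← hybar, Pseudoelement.comp_apply, hy, ha]
    obtain ⟨y', hy'⟩ := Pseudoelement.pseudo_exact_of_exact hS₂exact (f y) h1
    have h2 : Pseudoelement.pseudoApply f (Pseudoelement.pseudoApply i y')
        = Pseudoelement.pseudoApply f y := by
      rw [← Pseudoelement.comp_apply]; exact hy'
    have h3 : Pseudoelement.pseudoApply i y' = y := Pseudoelement.pseudo_injective_of_mono f h2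
    rw [← hy, ← h3, ← Pseudoelement.comp_apply, wip, Pseudoelement.zero_apply]
  have exact_Q : (ShortComplex.mk ybar gbar hyg).Exact := by
    apply Pseudoelement.exact_of_pseudo_exact
    intro b hb
    obtain ⟨e, he⟩ := Pseudoelement.pseudo_surjective_of_epi π b
    have h1 : Pseudoelement.pseudoApply g e = 0 := by
      rw [← hπg, Pseudoelement.comp_apply, he]; exact hb
    obtain ⟨y, hy⟩ := Pseudoelement.pseudo_exact_of_exact hfg.exact e h1
    refine ⟨Pseudoelement.pseudoApply p y, ?_⟩
    show Pseudoelement.pseudoApply ybar _ = b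
    rw [← Pseudoelement.comp_apply, hybar, Pseudoelement.comp_apply, hy, he]
  have epi_gbar : Epi gbar := by
    have : Epi (π ≫ gbar) := by rw [hπg]; infer_instance
    exact epi_of_epi π gbar
  obtain ⟨s, hs⟩ := h'' _ ybar gbar hyg (ShortComplex.ShortExact.mk' exact_Q mono_ybar epi_gbar)
  -- pull back `π` along `s`
  have hk0 : (i ≫ f) ≫ π = (0 : Y' ⟶ X) ≫ s := by rw [hifπ, zero_comp]
  set k : Y' ⟶ pullback π s := pullback.lift (i ≫ f) 0 hk0 with hk
  have hkfst : k ≫ pullback.fst π s = i ≫ f := pullback.lift_fst _ _ _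
  have hksnd : k ≫ pullback.snd π s = 0 := pullback.lift_snd _ _ _
  have mono_k : Mono k := by
    have : Mono (k ≫ pullback.fst π s) := by rw [hkfst]; exact mono_comp i f
    exact mono_of_mono k (pullback.fst π s)
  have epi_snd : Epi (pullback.snd π s) := inferInstance
  -- `k` is a kernel of `snd`
  have hkker : IsLimit (KernelFork.ofι k hksnd) := by
    refine KernelFork.IsLimit.ofι' _ _ (fun {W} t ht => ?_)
    obtain ⟨l, hl⟩ := KernelFork.IsLimit.lift' hS₂exact.fIsKernel (t ≫ pullback.fst π s)
      (by rw [Category.assoc, pullback.condition, ← Category.assoc, ht, zero_comp])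
    dsimp at hl
    refine ⟨l, ?_⟩
    apply pullback.hom_ext
    · rw [Category.assoc, hkfst]; exact hl
    · rw [Category.assoc, hksnd, comp_zero, ht]
  have exact_P : (ShortComplex.mk k (pullback.snd π s) hksnd).Exact :=
    ShortComplex.exact_of_f_is_kernel _ hkker
  obtain ⟨t, ht⟩ := h' _ k (pullback.snd π s) hksnd
    (ShortComplex.ShortExact.mk' exact_P mono_k epi_snd)
  refine ⟨t ≫ pullback.fst π s, ?_⟩
  rw [Category.assoc, ← hπg, pullback.condition_assoc, hs, Category.comp_id, ht]

section Aux

variable {A : Type u} [Category.{v} A] [Abelian A]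

/-- The sequence `cycles n → X n → X (n-1)` of a chain complex is exact. -/
lemma chainComplex_cycles_exact (K : ChainComplex A ℤ) (n : ℤ) :
    (ShortComplex.mk (K.iCycles n) (K.d n (n-1)) (K.iCycles_d n (n-1))).Exact :=
  ShortComplex.exact_of_f_is_kernel _ (K.cyclesIsKernel n (n-1) (by simp))

open CategoryTheory.Abelian in
open scoped Pseudoelement in
/-- Degreewise short exact sequences of chain complexes with acyclic first term induce
short exact sequences on cycles. -/
lemma cycles_shortExact {M' M M'' : ChainComplex A ℤ} (f : M' ⟶ M) (g : M ⟶ M'')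
    (w : ∀ n, f.f n ≫ g.f n = 0)
    (hses : ∀ n, (ShortComplex.mk (f.f n) (g.f n) (w n)).ShortExact)
    (hac' : ∀ n : ℤ, M'.ExactAt n) (n : ℤ)
    (hzero : HomologicalComplex.cyclesMap f n ≫ HomologicalComplex.cyclesMap g n = 0) :
    (ShortComplex.mk (HomologicalComplex.cyclesMap f n)
      (HomologicalComplex.cyclesMap g n) hzero).ShortExact := by
  have monof : ∀ m, Mono (f.f m) := fun m => (hses m).mono_f
  have epig : ∀ m, Epi (g.f m) := fun m => (hses m).epi_g
  have mono_cf : Mono (HomologicalComplex.cyclesMap f n) := by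
    have := monof n; infer_instance
  have exact_mid : (ShortComplex.mk (HomologicalComplex.cyclesMap f n)
      (HomologicalComplex.cyclesMap g n) hzero).Exact := by
    apply Pseudoelement.exact_of_pseudo_exact
    intro b hb
    have h1 : Pseudoelement.pseudoApply (g.f n) (Pseudoelement.pseudoApply (M.iCycles n) b)
        = 0 := by
      rw [← Pseudoelement.comp_apply, ← HomologicalComplex.cyclesMap_i,
        Pseudoelement.comp_apply]
      show Pseudoelement.pseudoApply (M''.iCycles n)
        (Pseudoelement.pseudoApply (HomologicalComplex.cyclesMap g n) b) = 0
      rw [hb, Pseudoelement.apply_zero]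
    obtain ⟨y, hy⟩ := Pseudoelement.pseudo_exact_of_exact (hses n).exact _ h1
    have h2 : Pseudoelement.pseudoApply (M'.d n (n-1)) y = 0 := by
      apply Pseudoelement.zero_of_map_zero _
        (Pseudoelement.pseudo_injective_of_mono (f.f (n-1)))
      rw [← Pseudoelement.comp_apply, ← HomologicalComplex.Hom.comm,
        Pseudoelement.comp_apply]
      show Pseudoelement.pseudoApply (M.d n (n-1)) (Pseudoelement.pseudoApply (f.f n) y) = 0
      rw [hy, ← Pseudoelement.comp_apply, HomologicalComplex.iCycles_d,
        Pseudoelement.zero_apply]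
    obtain ⟨y₀, hy₀⟩ := Pseudoelement.pseudo_exact_of_exact (chainComplex_cycles_exact M' n) y h2
    refine ⟨y₀, ?_⟩
    apply Pseudoelement.pseudo_injective_of_mono (M.iCycles n)
    show Pseudoelement.pseudoApply (M.iCycles n)
      (Pseudoelement.pseudoApply (HomologicalComplex.cyclesMap f n) y₀) = _
    rw [← Pseudoelement.comp_apply, HomologicalComplex.cyclesMap_i,
      Pseudoelement.comp_apply]
    show Pseudoelement.pseudoApply (f.f n) (Pseudoelement.pseudoApply (M'.iCycles n) y₀) = _
    rw [hy₀, hy]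
  have epi_cg : Epi (HomologicalComplex.cyclesMap g n) := by
    apply Pseudoelement.epi_of_pseudo_surjective
    intro z''
    obtain ⟨e, he⟩ := Pseudoelement.pseudo_surjective_of_epi (g.f n)
      (Pseudoelement.pseudoApply (M''.iCycles n) z'')
    have h3 : Pseudoelement.pseudoApply (g.f (n-1))
        (Pseudoelement.pseudoApply (M.d n (n-1)) e) = 0 := by
      rw [← Pseudoelement.comp_apply, ← HomologicalComplex.Hom.comm,
        Pseudoelement.comp_apply, he, ← Pseudoelement.comp_apply,
        HomologicalComplex.iCycles_d, Pseudoelement.zero_apply]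
    obtain ⟨y, hy⟩ := Pseudoelement.pseudo_exact_of_exact (hses (n-1)).exact _ h3
    have h4 : Pseudoelement.pseudoApply (M'.d (n-1) (n-1-1)) y = 0 := by
      apply Pseudoelement.zero_of_map_zero _
        (Pseudoelement.pseudo_injective_of_mono (f.f (n-1-1)))
      rw [← Pseudoelement.comp_apply, ← HomologicalComplex.Hom.comm,
        Pseudoelement.comp_apply]
      show Pseudoelement.pseudoApply (M.d (n-1) (n-1-1))
        (Pseudoelement.pseudoApply (f.f (n-1)) y) = 0
      rw [hy, ← Pseudoelement.comp_apply, HomologicalComplex.d_comp_d,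
        Pseudoelement.zero_apply]
    have hsc' : (M'.sc' n (n-1) (n-1-1)).Exact :=
      (HomologicalComplex.exactAt_iff' M' n (n-1) (n-1-1) (by simp) (by simp)).1 (hac' (n-1))
    obtain ⟨m', hm'⟩ : ∃ m' : Pseudoelement (M'.X n),
        Pseudoelement.pseudoApply (M'.d n (n-1)) m' = y :=
      Pseudoelement.pseudo_exact_of_exact hsc' y h4
    have h5 : Pseudoelement.pseudoApply (M.d n (n-1)) e
        = Pseudoelement.pseudoApply (M.d n (n-1))
          (Pseudoelement.pseudoApply (f.f n) m') := by
      rw [← Pseudoelement.comp_apply, HomologicalComplex.Hom.comm,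
        Pseudoelement.comp_apply]
      show _ = Pseudoelement.pseudoApply (f.f (n-1))
        (Pseudoelement.pseudoApply (M'.d n (n-1)) m')
      rw [hm']; exact hy.symm
    obtain ⟨c, hc0, hcg⟩ := Pseudoelement.sub_of_eq_image (M.d n (n-1)) e
      (Pseudoelement.pseudoApply (f.f n) m') h5
    have h6 : Pseudoelement.pseudoApply (g.f n)
        (Pseudoelement.pseudoApply (f.f n) m') = 0 := by
      rw [← Pseudoelement.comp_apply, w n, Pseudoelement.zero_apply]
    have hgc := hcg _ (g.f n) h6
    obtain ⟨c₀, hc₀⟩ := Pseudoelement.pseudo_exact_of_exact (chainComplex_cycles_exact M n) c hc0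
    refine ⟨c₀, ?_⟩
    apply Pseudoelement.pseudo_injective_of_mono (M''.iCycles n)
    show Pseudoelement.pseudoApply (M''.iCycles n)
      (Pseudoelement.pseudoApply (HomologicalComplex.cyclesMap g n) c₀) = _
    rw [← Pseudoelement.comp_apply, HomologicalComplex.cyclesMap_i,
      Pseudoelement.comp_apply]
    show Pseudoelement.pseudoApply (g.f n) (Pseudoelement.pseudoApply (M.iCycles n) c₀) = _
    rw [hc₀, hgc, he]
  exact ShortComplex.ShortExact.mk' exact_mid mono_cf epi_cg

end Aux

/-- For a cotorsion pair `(U,V)` and a degreewise short exact sequence of complexes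
`0 → M′ → M → M″ → 0` with all terms of all three complexes in `V`: if `M′` and `M″` are
acyclic with all cycle objects in `V`, then so is `M`. -/
theorem stmt7 {A : Type u} [Category.{v} A] [Abelian A] (U V : Set A)
    (h : IsCotorsionPair U V)
    (M' M M'' : ChainComplex A ℤ) (f : M' ⟶ M) (g : M ⟶ M'')
    (w : ∀ n, f.f n ≫ g.f n = 0)
    (hses : ∀ n, (ShortComplex.mk (f.f n) (g.f n) (w n)).ShortExact)
    (hM' : ∀ n, M'.X n ∈ V) (hM : ∀ n, M.X n ∈ V) (hM'' : ∀ n, M''.X n ∈ V)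
    (hac' : IsAcyclicComplex M') (hcyc' : ∀ n, M'.cycles n ∈ V)
    (hac'' : IsAcyclicComplex M'') (hcyc'' : ∀ n, M''.cycles n ∈ V) :
    IsAcyclicComplex M ∧ ∀ n, M.cycles n ∈ V := by
  have hfg : f ≫ g = 0 := by ext n; exact w n
  have hS : (ShortComplex.mk f g hfg).ShortExact := by
    rw [HomologicalComplex.shortExact_iff_degreewise_shortExact]
    intro n
    exact hses n
  have hacM : IsAcyclicComplex M := by
    intro n
    rw [HomologicalComplex.exactAt_iff_isZero_homology]
    have h2 := hS.homology_exact₂ (i := n)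
    refine h2.isZero_X₂ ?_ ?_
    · exact ((HomologicalComplex.exactAt_iff_isZero_homology M' n).1 (hac' n)).eq_of_src _ _
    · exact ((HomologicalComplex.exactAt_iff_isZero_homology M'' n).1 (hac'' n)).eq_of_tgt _ _
  refine ⟨hacM, fun n => ?_⟩
  have hzero : HomologicalComplex.cyclesMap f n ≫ HomologicalComplex.cyclesMap g n = 0 := by
    rw [← HomologicalComplex.cyclesMap_comp, hfg, HomologicalComplex.cyclesMap_zero]
  have hcse := cycles_shortExact f g w hses hac' n hzero
  refine (h.2 _).2 (fun X hX => ?_)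
  exact ext1Vanishes_of_extension _ _ hzero hcse
    ((h.2 _).1 (hcyc' n) X hX) ((h.2 _).1 (hcyc'' n) X hX)
end

section
/- Let A be an abelian category and E a full additive subcategory closed under extensions and direct summands, with enough projectives (every object of E is an admissible quotient of a projective object of E). If every object of E admits a finite resolution by projective objects of E, then every bounded-below complex of projective objects of E that is eventually E-acyclic is homotopy equivalent to a bounded complex of projective objects of E. -/
open CategoryTheory Category Limits

universe v u

/-- `P` is a projective object of the exact category `E` (exact structure inherited
from the ambient abelian category). -/
def ProjectiveInSub {A : Type u} [Category.{v} A] [Abelian A] (E : Set A) (P : A) : Prop :=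
  P ∈ E ∧ ∀ (K X Y : A) (f : K ⟶ X) (g : X ⟶ Y) (w : f ≫ g = 0),
    K ∈ E → X ∈ E → Y ∈ E → (ShortComplex.mk f g w).ShortExact →
    ∀ h : P ⟶ Y, ∃ l : P ⟶ X, l ≫ g = h

/-- `M` has a resolution of length `n` in the exact category `E` by projective objects
of `E` (all syzygies lie in `E`, so the resolution is admissible). -/
def FinProjResLen {A : Type u} [Category.{v} A] [Abelian A] (E : Set A) : ℕ → A → Prop
  | 0, M => ProjectiveInSub E M
  | n + 1, M => ∃ (P K : A) (f : K ⟶ P) (g : P ⟶ M) (w : f ≫ g = 0),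
      ProjectiveInSub E P ∧ K ∈ E ∧ (ShortComplex.mk f g w).ShortExact ∧
      FinProjResLen E n K

set_option linter.unusedSectionVars false
set_option maxHeartbeats 1000000

namespace Stmt8Aux
open ZeroObject
variable {A : Type u} [Category.{v} A] [Abelian A] {E : Set A}
variable (hsummand : ∀ (X Y : A) (i : X ⟶ Y) (r : Y ⟶ X), i ≫ r = 𝟙 X → Y ∈ E → X ∈ E)

include hsummand in
lemma mem_of_iso {M M' : A} (e : M ≅ M') (h : M ∈ E) : M' ∈ E :=
  hsummand M' M e.inv e.hom e.inv_hom_id h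

include hsummand in
lemma proj_of_retract {M S : A} (i : M ⟶ S) (r : S ⟶ M) (hir : i ≫ r = 𝟙 M)
    (hS : ProjectiveInSub E S) : ProjectiveInSub E M := by
  refine ⟨hsummand M S i r hir hS.1, fun K X Y f g w hK hX hY hse h => ?_⟩
  obtain ⟨l, hl⟩ := hS.2 K X Y f g w hK hX hY hse (r ≫ h)
  exact ⟨i ≫ l, by rw [assoc, hl, ← assoc, hir, id_comp]⟩

include hsummand in
lemma proj_of_iso {M M' : A} (e : M ≅ M') (h : ProjectiveInSub E M) :
    ProjectiveInSub E M' :=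
  proj_of_retract hsummand e.inv e.hom e.inv_hom_id h

lemma proj_zero (hzero : ∀ Z : A, IsZero Z → Z ∈ E) {P : A} (h : IsZero P) :
    ProjectiveInSub E P :=
  ⟨hzero P h, fun _ _ _ _ g _ _ _ _ _ hh =>
    ⟨0, by rw [zero_comp]; exact (h.eq_of_src 0 hh)⟩⟩

lemma proj_biprod (hadd : ∀ X Y : A, X ∈ E → Y ∈ E → (X ⊞ Y) ∈ E)
    {P P' : A} (hP : ProjectiveInSub E P) (hP' : ProjectiveInSub E P') :
    ProjectiveInSub E (P ⊞ P') := by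
  refine ⟨hadd P P' hP.1 hP'.1, fun K X Y f g w hK hX hY hse h => ?_⟩
  obtain ⟨l1, hl1⟩ := hP.2 K X Y f g w hK hX hY hse (biprod.inl ≫ h)
  obtain ⟨l2, hl2⟩ := hP'.2 K X Y f g w hK hX hY hse (biprod.inr ≫ h)
  refine ⟨biprod.desc l1 l2, ?_⟩
  apply biprod.hom_ext' <;> simp [hl1, hl2]

/-- splitting of a short exact sequence whose quotient is projective in `E` -/
lemma ses_splitting {K P M : A} (f : K ⟶ P) (g : P ⟶ M) (w : f ≫ g = 0)
    (hse : (ShortComplex.mk f g w).ShortExact) (hM : ProjectiveInSub E M)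
    (hK : K ∈ E) (hP : P ∈ E) :
    Nonempty (ShortComplex.mk f g w).Splitting := by
  obtain ⟨σ, hσ⟩ := hM.2 K P M f g w hK hP hM.1 hse (𝟙 M)
  exact ⟨ShortComplex.Splitting.ofExactOfSection _ hse.exact σ hσ hse.mono_f⟩

lemma ses_iso₃ {K P M M' : A} (f : K ⟶ P) (g : P ⟶ M) (w : f ≫ g = 0)
    (hse : (ShortComplex.mk f g w).ShortExact) (e : M ≅ M') :
    (ShortComplex.mk f (g ≫ e.hom) (by rw [← assoc, w, zero_comp])).ShortExact := by
  exact ShortComplex.shortExact_of_iso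
    (ShortComplex.isoMk (S₁ := ShortComplex.mk f g w) (Iso.refl _) (Iso.refl _) e
      (by simp) (by simp)) hse

lemma mono_biprod_map {P P' Q Q' : A} (f : P ⟶ Q) (f' : P' ⟶ Q') [Mono f] [Mono f'] :
    Mono (biprod.map f f') := by
  constructor
  intro T u v h
  apply biprod.hom_ext
  · rw [← cancel_mono f]
    simpa using h =≫ biprod.fst
  · rw [← cancel_mono f']
    simpa using h =≫ biprod.snd

lemma epi_biprod_map {P P' Q Q' : A} (f : P ⟶ Q) (f' : P' ⟶ Q') [Epi f] [Epi f'] :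
    Epi (biprod.map f f') := by
  constructor
  intro T u v h
  apply biprod.hom_ext'
  · rw [← cancel_epi f]
    simpa [biprod.inl_map_assoc] using biprod.inl ≫= h
  · rw [← cancel_epi f']
    simpa [biprod.inr_map_assoc] using biprod.inr ≫= h

lemma ses_biprod {K P M K' P' M' : A} (f : K ⟶ P) (g : P ⟶ M) (w : f ≫ g = 0)
    (f' : K' ⟶ P') (g' : P' ⟶ M') (w' : f' ≫ g' = 0)
    (hse : (ShortComplex.mk f g w).ShortExact)
    (hse' : (ShortComplex.mk f' g' w').ShortExact) :
    (ShortComplex.mk (biprod.map f f') (biprod.map g g')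
      (by ext <;> simp [reassoc_of% w, reassoc_of% w', w, w'])).ShortExact := by
  have hm : Mono f := hse.mono_f
  have hm' : Mono f' := hse'.mono_f
  have he : Epi g := hse.epi_g
  have he' : Epi g' := hse'.epi_g
  have hker := hse.fIsKernel
  have hker' := hse'.fIsKernel
  refine ShortComplex.ShortExact.mk ?_ (mono_f := mono_biprod_map f f')
    (epi_g := epi_biprod_map g g')
  apply ShortComplex.exact_of_f_is_kernel
  refine KernelFork.IsLimit.ofι _ _ (fun t ht => ?_) (fun t ht => ?_) (fun t ht l hl => ?_)
  · -- lift
    exact biprod.lift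
      (KernelFork.IsLimit.lift' hker (t ≫ biprod.fst)
        (by rw [assoc, ← biprod.map_fst g g', ← assoc, ht, zero_comp])).1
      (KernelFork.IsLimit.lift' hker' (t ≫ biprod.snd)
        (by rw [assoc, ← biprod.map_snd g g', ← assoc, ht, zero_comp])).1
  · -- fac
    apply biprod.hom_ext
    · simpa using (KernelFork.IsLimit.lift' hker (t ≫ biprod.fst) _).2
    · simpa using (KernelFork.IsLimit.lift' hker' (t ≫ biprod.snd) _).2
  · -- uniq
    have : Mono (biprod.map f f') := mono_biprod_map f f'
    rw [← cancel_mono (biprod.map f f')]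
    rw [hl]
    apply biprod.hom_ext
    · simpa using (KernelFork.IsLimit.lift' hker (t ≫ biprod.fst) _).2.symm
    · simpa using (KernelFork.IsLimit.lift' hker' (t ≫ biprod.snd) _).2.symm



lemma pullback_split_iso
    (hext : ∀ (X' X X'' : A) (f : X' ⟶ X) (g : X ⟶ X'') (w : f ≫ g = 0),
      (ShortComplex.mk f g w).ShortExact → X' ∈ E → X'' ∈ E → X ∈ E)
    {K1 P1 M P2 : A} (f1 : K1 ⟶ P1) (g1 : P1 ⟶ M) (w1 : f1 ≫ g1 = 0)
    (hse1 : (ShortComplex.mk f1 g1 w1).ShortExact) (g2 : P2 ⟶ M)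
    (hK1 : K1 ∈ E) (hP2 : ProjectiveInSub E P2) :
    Nonempty (pullback g1 g2 ≅ K1 ⊞ P2) ∧ pullback g1 g2 ∈ E := by
  have hm1 : Mono f1 := hse1.mono_f
  have he1 : Epi g1 := hse1.epi_g
  have hker := hse1.fIsKernel
  have w : pullback.lift f1 0 (by rw [w1, zero_comp]) ≫ pullback.snd g1 g2 = 0 :=
    pullback.lift_snd _ _ _
  have hmono : Mono (pullback.lift f1 0 (by rw [w1, zero_comp]) : K1 ⟶ pullback g1 g2) := by
    have h : Mono ((pullback.lift f1 0 (by rw [w1, zero_comp]) : K1 ⟶ pullback g1 g2) ≫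
        pullback.fst g1 g2) := by
      rw [pullback.lift_fst]; exact hm1
    exact mono_of_mono _ (pullback.fst g1 g2)
  have hepi : Epi (pullback.snd g1 g2) := inferInstance
  have hse : (ShortComplex.mk (pullback.lift f1 0 (by rw [w1, zero_comp]) : K1 ⟶ pullback g1 g2)
      (pullback.snd g1 g2) w).ShortExact := by
    refine ShortComplex.ShortExact.mk ?_ (mono_f := hmono) (epi_g := hepi)
    apply ShortComplex.exact_of_f_is_kernel
    refine KernelFork.IsLimit.ofι _ _ (fun t ht => ?_) (fun t ht => ?_) (fun t ht l hl => ?_)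
    · exact (KernelFork.IsLimit.lift' hker (t ≫ pullback.fst g1 g2)
        (by rw [assoc, pullback.condition, ← assoc, ht, zero_comp])).1
    · apply pullback.hom_ext
      · erw [assoc, pullback.lift_fst]
        exact (KernelFork.IsLimit.lift' hker (t ≫ pullback.fst g1 g2) _).2
      · erw [assoc, pullback.lift_snd, comp_zero]
        exact ht.symm
    · rw [← cancel_mono f1]
      have := hl =≫ pullback.fst g1 g2
      simp only [assoc, pullback.lift_fst] at this
      rw [this]
      exact (KernelFork.IsLimit.lift' hker (t ≫ pullback.fst g1 g2) _).2.symm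
  have hQE : pullback g1 g2 ∈ E := hext _ _ _ _ _ w hse hK1 hP2.1
  obtain ⟨spl⟩ := ses_splitting _ _ w hse hP2 hK1 hQE
  exact ⟨⟨spl.isoBinaryBiproduct⟩, hQE⟩

lemma schanuel
    (hext : ∀ (X' X X'' : A) (f : X' ⟶ X) (g : X ⟶ X'') (w : f ≫ g = 0),
      (ShortComplex.mk f g w).ShortExact → X' ∈ E → X'' ∈ E → X ∈ E)
    {K1 P1 K2 P2 M : A}
    (f1 : K1 ⟶ P1) (g1 : P1 ⟶ M) (w1 : f1 ≫ g1 = 0)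
    (hse1 : (ShortComplex.mk f1 g1 w1).ShortExact)
    (f2 : K2 ⟶ P2) (g2 : P2 ⟶ M) (w2 : f2 ≫ g2 = 0)
    (hse2 : (ShortComplex.mk f2 g2 w2).ShortExact)
    (hP1 : ProjectiveInSub E P1) (hP2 : ProjectiveInSub E P2)
    (hK1 : K1 ∈ E) (hK2 : K2 ∈ E) :
    Nonempty ((K1 ⊞ P2) ≅ (K2 ⊞ P1)) := by
  obtain ⟨⟨e1⟩, _⟩ := pullback_split_iso hext f1 g1 w1 hse1 g2 hK1 hP2
  obtain ⟨⟨e2⟩, _⟩ := pullback_split_iso hext f2 g2 w2 hse2 g1 hK2 hP1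
  have he1 : Epi g1 := hse1.epi_g
  have he2 : Epi g2 := hse2.epi_g
  exact ⟨e1.symm ≪≫ pullbackSymmetry g1 g2 ≪≫ e2⟩
noncomputable def biprod_iso_zero {X Z : A} (hZ : IsZero Z) : (X ⊞ Z) ≅ X where
  hom := biprod.fst
  inv := biprod.lift (𝟙 X) 0
  hom_inv_id := by
    apply biprod.hom_ext
    · simp
    · simp only [assoc, biprod.lift_snd, comp_zero, id_comp]
      exact hZ.eq_of_tgt _ _
  inv_hom_id := by simp

lemma ses_zero_id {Z P : A} (hZ : IsZero Z) :
    (ShortComplex.mk (0 : Z ⟶ P) (𝟙 P) zero_comp).ShortExact := by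
  have hm : Mono (0 : Z ⟶ P) := ⟨fun u v _ => hZ.eq_of_tgt u v⟩
  have hi : IsIso (ShortComplex.mk (0 : Z ⟶ P) (𝟙 P) zero_comp).g := by
    dsimp; infer_instance
  refine ShortComplex.ShortExact.mk ?_ (mono_f := hm) (epi_g := by dsimp; infer_instance)
  exact (ShortComplex.Splitting.ofIsZeroOfIsIso _ hZ hi).exact

section FinLemmas

variable {E : Set A}

def Hzero (E : Set A) : Prop := ∀ Z : A, IsZero Z → Z ∈ E
def Hadd (E : Set A) : Prop := ∀ X Y : A, X ∈ E → Y ∈ E → (X ⊞ Y) ∈ E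
def Hext (E : Set A) : Prop := ∀ (X' X X'' : A) (f : X' ⟶ X) (g : X ⟶ X'') (w : f ≫ g = 0),
      (ShortComplex.mk f g w).ShortExact → X' ∈ E → X'' ∈ E → X ∈ E
def Hsummand (E : Set A) : Prop :=
  ∀ (X Y : A) (i : X ⟶ Y) (r : Y ⟶ X), i ≫ r = 𝟙 X → Y ∈ E → X ∈ E
def Henough (E : Set A) : Prop := ∀ M ∈ E, ∃ (P K : A) (f : K ⟶ P) (g : P ⟶ M) (w : f ≫ g = 0),
      ProjectiveInSub E P ∧ K ∈ E ∧ (ShortComplex.mk f g w).ShortExact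

lemma fin_iso (hsummand : Hsummand E) (n : ℕ) : ∀ {M M' : A}, (M ≅ M') → FinProjResLen E n M → FinProjResLen E n M' := by
  induction n with
  | zero => exact fun e h => proj_of_iso hsummand e h
  | succ n ih =>
    rintro M M' e ⟨P, K, f, g, w, hP, hK, hse, hres⟩
    exact ⟨P, K, f, g ≫ e.hom, by rw [← assoc, w, zero_comp], hP, hK,
      ses_iso₃ f g w hse e, hres⟩

lemma fin_biprod (hzero : Hzero E) (hadd : Hadd E) (hsummand : Hsummand E) (n : ℕ) : ∀ {M P : A}, FinProjResLen E n M → ProjectiveInSub E P →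
    FinProjResLen E n (M ⊞ P) := by
  induction n with
  | zero => exact fun h hP => proj_biprod hadd h hP
  | succ n ih =>
    rintro M P ⟨P0, K, f, g, w, hP0, hK, hse, hres⟩ hP
    refine ⟨P0 ⊞ P, K ⊞ (0 : A), biprod.map f (0 : (0 : A) ⟶ P), biprod.map g (𝟙 P),
      by ext <;> simp [reassoc_of% w, w], proj_biprod hadd hP0 hP,
      hadd _ _ hK (hzero _ (isZero_zero A)), ?_, ?_⟩
    · exact ses_biprod f g w (0 : (0 : A) ⟶ P) (𝟙 P) zero_comp hse
        (ses_zero_id (isZero_zero A))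
    · exact fin_iso hsummand n (biprod_iso_zero (isZero_zero A)).symm hres

lemma fin_summand (hzero : Hzero E) (hadd : Hadd E) (hext : Hext E) (hsummand : Hsummand E)
    (henough : Henough E) (n : ℕ) : ∀ {M S : A} (i : M ⟶ S) (r : S ⟶ M), i ≫ r = 𝟙 M → M ∈ E →
    S ∈ E → FinProjResLen E n S → FinProjResLen E n M := by
  induction n with
  | zero => exact fun i r hir _ _ h => proj_of_retract hsummand i r hir h
  | succ n ih =>
    rintro M S i r hir hM hS ⟨PS, KS, fS, gS, wS, hPS, hKS, hseS, hresS⟩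
    have hsplitepi : IsSplitEpi r := ⟨⟨⟨i, hir⟩⟩⟩
    have hepi : Epi r := hsplitepi.epi
    have hseK : (ShortComplex.mk (kernel.ι r) r (kernel.condition r)).ShortExact := by
      refine ShortComplex.ShortExact.mk ?_ (mono_f := inferInstance) (epi_g := hepi)
      exact ShortComplex.exact_of_f_is_kernel _ (kernelIsKernel r)
    have spl := ShortComplex.Splitting.ofExactOfSection _ hseK.exact i hir inferInstance
    have e : S ≅ (kernel r ⊞ M) := spl.isoBinaryBiproduct
    have hM' : kernel r ∈ E := hsummand (kernel r) S (kernel.ι r) spl.r spl.f_r hS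
    obtain ⟨PM, KM, fM, gM, wM, hPM, hKM, hseM⟩ := henough M hM
    obtain ⟨P', K', f', g', w', hP', hK', hse'⟩ := henough (kernel r) hM'
    have bigse := ses_biprod f' g' w' fM gM wM hse' hseM
    have bigse' := ses_iso₃ _ _ _ bigse e.symm
    obtain ⟨esch⟩ := schanuel hext (biprod.map f' fM) (biprod.map g' gM ≫ e.symm.hom)
      (by rw [← assoc]; rw [show biprod.map f' fM ≫ biprod.map g' gM = 0 from by
        ext <;> simp [reassoc_of% w', reassoc_of% wM, w', wM], zero_comp]) bigse'
      fS gS wS hseS (proj_biprod hadd hP' hPM) hPS (hadd _ _ hK' hKM) hKS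
    have hresBig : FinProjResLen E n (KS ⊞ (P' ⊞ PM)) :=
      fin_biprod hzero hadd hsummand n hresS (proj_biprod hadd hP' hPM)
    have hres2 : FinProjResLen E n ((K' ⊞ KM) ⊞ PS) :=
      fin_iso hsummand n esch.symm hresBig
    have hKMres : FinProjResLen E n KM :=
      ih (biprod.inr ≫ biprod.inl) (biprod.fst ≫ biprod.snd) (by simp) hKM
        (hadd _ _ (hadd _ _ hK' hKM) hPS.1) hres2
    exact ⟨PM, KM, fM, gM, wM, hPM, hKM, hseM, hKMres⟩

lemma syzygy (hzero : Hzero E) (hadd : Hadd E) (hext : Hext E) (hsummand : Hsummand E)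
    (henough : Henough E) (n : ℕ) {K P M : A} (f : K ⟶ P) (g : P ⟶ M) (w : f ≫ g = 0)
    (hse : (ShortComplex.mk f g w).ShortExact) (hP : ProjectiveInSub E P) (hK : K ∈ E)
    (hres : FinProjResLen E (n + 1) M) : FinProjResLen E n K := by
  obtain ⟨P', K', f', g', w', hP', hK', hse', hres'⟩ := hres
  obtain ⟨esch⟩ := schanuel hext f g w hse f' g' w' hse' hP hP' hK hK'
  have h1 : FinProjResLen E n (K' ⊞ P) := fin_biprod hzero hadd hsummand n hres' hP
  have h2 : FinProjResLen E n (K ⊞ P') := fin_iso hsummand n esch.symm h1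
  exact fin_summand hzero hadd hext hsummand henough n biprod.inl biprod.fst (by simp) hK
    (hadd _ _ hK hP'.1) h2

lemma syzygy_zero (hsummand : Hsummand E) {K P M : A} (f : K ⟶ P) (g : P ⟶ M) (w : f ≫ g = 0)
    (hse : (ShortComplex.mk f g w).ShortExact) (hP : ProjectiveInSub E P) (hK : K ∈ E)
    (hM : ProjectiveInSub E M) : ProjectiveInSub E K := by
  obtain ⟨spl⟩ := ses_splitting f g w hse hM hK hP.1
  exact proj_of_retract hsummand f spl.r spl.f_r hP

end FinLemmas

section Complexes

variable (X : ChainComplex A ℤ)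

omit [Abelian A] in
lemma down_rel (i j : ℤ) : (ComplexShape.down ℤ).Rel i j ↔ j + 1 = i := Iff.rfl

lemma w_cycles (n : ℤ) : X.iCycles (n + 1) ≫ X.toCycles (n + 1) n = 0 := by
  rw [← cancel_mono (X.iCycles n)]
  simp

lemma epi_toCycles_of_exactAt {n : ℤ} (h : X.ExactAt n) : Epi (X.toCycles (n + 1) n) := by
  rw [X.exactAt_iff' (n + 1) n (n - 1) (by simp) (by simp)] at h
  have h2 : Epi (X.sc' (n + 1) n (n - 1)).toCycles :=
    (ShortComplex.exact_iff_epi_toCycles _).1 h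
  have heq := X.toCycles_cyclesIsoSc'_hom (n + 1) n (n - 1) (by simp) (by simp)
  have h4 : Epi ((X.sc' (n + 1) n (n - 1)).toCycles ≫
      (X.cyclesIsoSc' (n + 1) n (n - 1) (by simp) (by simp)).inv) := @epi_comp _ _ _ _ _ _ h2 _ _
  have h5 : X.toCycles (n + 1) n = (X.sc' (n + 1) n (n - 1)).toCycles ≫
      (X.cyclesIsoSc' (n + 1) n (n - 1) (by simp) (by simp)).inv := by
    exact (Iso.eq_comp_inv _).2 heq
  rw [h5]
  exact h4

lemma ses_cycles {n : ℤ} (h : X.ExactAt n) :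
    (ShortComplex.mk (X.iCycles (n + 1)) (X.toCycles (n + 1) n)
      (w_cycles X n)).ShortExact := by
  have hepi := epi_toCycles_of_exactAt X h
  refine ShortComplex.ShortExact.mk ?_ (mono_f := by dsimp; infer_instance) (epi_g := hepi)
  apply ShortComplex.exact_of_f_is_kernel
  refine KernelFork.IsLimit.ofι _ _
    (fun t ht => X.liftCycles t n (by simp) ?_) (fun t ht => by simp) (fun t ht l hl => ?_)
  · have h2 := ht =≫ X.iCycles n
    simpa using h2
  · rw [← cancel_mono (X.iCycles (n + 1))]
    simpa using hl

variable (m : ℤ)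

noncomputable def Qobj (n : ℤ) : A := if n ≤ m then X.X n else if n = m + 1 then X.cycles m else 0

noncomputable def isoX {n : ℤ} (h : n ≤ m) : Qobj X m n ≅ X.X n :=
  eqToIso (by rw [Qobj, if_pos h])

noncomputable def isoZ : Qobj X m (m + 1) ≅ X.cycles m :=
  eqToIso (by rw [Qobj, if_neg (by omega), if_pos rfl])

lemma isZero_Qobj {n : ℤ} (h : m + 1 < n) : IsZero (Qobj X m n) := by
  rw [Qobj, if_neg (by omega), if_neg (by omega)]
  exact isZero_zero A

noncomputable def Qd : ∀ i j : ℤ, Qobj X m i ⟶ Qobj X m j := fun i j =>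
  if hij : j + 1 = i then
    (if h : i ≤ m then
      (isoX X m h).hom ≫ X.d i j ≫ (isoX X m (show j ≤ m by omega)).inv
     else if h2 : i = m + 1 then
      eqToHom (show Qobj X m i = Qobj X m (m + 1) by rw [h2]) ≫ (isoZ X m).hom ≫
        X.iCycles m ≫ eqToHom (show X.X m = X.X j by rw [show j = m by omega]) ≫
        (isoX X m (show j ≤ m by omega)).inv
     else 0)
  else 0

lemma Qd_eq_of_le {j : ℤ} (h : j + 1 ≤ m) :
    Qd X m (j + 1) j = (isoX X m h).hom ≫ X.d (j + 1) j ≫ (isoX X m (by omega)).inv := by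
  rw [Qd, dif_pos rfl, dif_pos h]

lemma Qd_eq_top :
    Qd X m (m + 1) m = (isoZ X m).hom ≫ X.iCycles m ≫ (isoX X m (le_refl m)).inv := by
  rw [Qd, dif_pos rfl, dif_neg (by omega), dif_pos rfl]
  simp

lemma Qd_eq_zero_of_lt {i j : ℤ} (h : m + 1 < i) : Qd X m i j = 0 := by
  rw [Qd]
  by_cases h1 : j + 1 = i
  · rw [dif_pos h1, dif_neg (by omega), dif_neg (by omega)]
  · rw [dif_neg h1]

noncomputable def Qcx : ChainComplex A ℤ where
  X := Qobj X m
  d := Qd X m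
  shape := fun i j hij => dif_neg hij
  d_comp_d' := by
    intro i j k hij hjk
    rw [down_rel] at hij hjk
    subst hij hjk
    by_cases h1 : k + 1 + 1 ≤ m
    · rw [Qd_eq_of_le X m h1, Qd_eq_of_le X m (by omega)]
      simp
    · by_cases h2 : k + 1 + 1 = m + 1
      · have hk : k + 1 = m := by omega
        subst hk
        rw [Qd_eq_top X (k + 1), Qd_eq_of_le X (k + 1) (le_refl _)]
        simp
      · rw [Qd_eq_zero_of_lt X m (by omega), zero_comp]

noncomputable def fQf : ∀ n : ℤ, X.X n ⟶ Qobj X m n := fun n =>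
  if h : n ≤ m then (isoX X m h).inv
  else if h2 : n = m + 1 then
    eqToHom (show X.X n = X.X (m + 1) by rw [h2]) ≫ X.toCycles (m + 1) m ≫
      (isoZ X m).inv ≫ eqToHom (show Qobj X m (m + 1) = Qobj X m n by rw [h2])
  else 0

lemma fQf_le {n : ℤ} (h : n ≤ m) : fQf X m n = (isoX X m h).inv := dif_pos h

lemma fQf_top : fQf X m (m + 1) = X.toCycles (m + 1) m ≫ (isoZ X m).inv := by
  rw [fQf, dif_neg (by omega), dif_pos rfl]
  simp

lemma fQf_zero {n : ℤ} (h : m + 1 < n) : fQf X m n = 0 := by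
  rw [fQf, dif_neg (by omega), dif_neg (by omega)]

noncomputable def fQ : X ⟶ Qcx X m where
  f := fQf X m
  comm' := by
    intro i j hij
    rw [down_rel] at hij
    subst hij
    show fQf X m (j + 1) ≫ Qd X m (j + 1) j = X.d (j + 1) j ≫ fQf X m j
    by_cases h1 : j + 1 ≤ m
    · rw [fQf_le X m h1, fQf_le X m (by omega), Qd_eq_of_le X m h1]
      simp
    · by_cases h2 : j + 1 = m + 1
      · have hj : j = m := by omega
        subst hj
        rw [fQf_top X j, fQf_le X j (le_refl j), Qd_eq_top X j]
        simp
      · by_cases h3 : j + 1 = m + 1 + 1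
        · have hj : j = m + 1 := by omega
          subst hj
          rw [fQf_zero X m (by omega), fQf_top X m, zero_comp]
          simp [reassoc_of% (X.d_toCycles (m + 1 + 1) (m + 1) m)]
        · rw [fQf_zero X m (by omega), fQf_zero X m (by omega), zero_comp, comp_zero]

variable (sc : ∀ n : ℤ, X.cycles n ⟶ X.X (n + 1))

noncomputable def gQf : ∀ n : ℤ, Qobj X m n ⟶ X.X n := fun n =>
  if h : n ≤ m then (isoX X m h).hom
  else if h2 : n = m + 1 then
    eqToHom (show Qobj X m n = Qobj X m (m + 1) by rw [h2]) ≫ (isoZ X m).hom ≫ sc m ≫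
      eqToHom (show X.X (m + 1) = X.X n by rw [h2])
  else 0

lemma gQf_le {n : ℤ} (h : n ≤ m) : gQf X m sc n = (isoX X m h).hom := dif_pos h

lemma gQf_top : gQf X m sc (m + 1) = (isoZ X m).hom ≫ sc m := by
  rw [gQf, dif_neg (by omega), dif_pos rfl]
  simp

lemma gQf_zero {n : ℤ} (h : m + 1 < n) : gQf X m sc n = 0 := by
  rw [gQf, dif_neg (by omega), dif_neg (by omega)]

noncomputable def gQ (hscm : sc m ≫ X.toCycles (m + 1) m = 𝟙 _) : Qcx X m ⟶ X where
  f := gQf X m sc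
  comm' := by
    intro i j hij
    rw [down_rel] at hij
    subst hij
    show gQf X m sc (j + 1) ≫ X.d (j + 1) j = Qd X m (j + 1) j ≫ gQf X m sc j
    by_cases h1 : j + 1 ≤ m
    · rw [gQf_le X m sc h1, gQf_le X m sc (by omega), Qd_eq_of_le X m h1]
      simp
    · by_cases h2 : j + 1 = m + 1
      · have hj : j = m := by omega
        subst hj
        rw [gQf_top X j sc, gQf_le X j sc (le_refl j), Qd_eq_top X j]
        have : sc j ≫ X.d (j + 1) j = X.iCycles j := by
          rw [show X.d (j + 1) j = X.toCycles (j + 1) j ≫ X.iCycles j by simp, ← assoc,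
            hscm, id_comp]
        simp [assoc, this]
      · rw [gQf_zero X m sc (by omega), Qd_eq_zero_of_lt X m (by omega), zero_comp, zero_comp]

end Complexes

section Htpy

variable (X : ChainComplex A ℤ) (m : ℤ) (sc : ∀ n : ℤ, X.cycles n ⟶ X.X (n + 1))

lemma d_congr {a b : ℤ} (h : a = b) (p : X.X a = X.X b) (j : ℤ) :
    eqToHom p ≫ X.d b j = X.d a j := by subst h; simp

lemma toCycles_congr (i : ℤ) {j j' : ℤ} (h : j = j') (p : X.cycles j = X.cycles j') :
    X.toCycles i j ≫ eqToHom p = X.toCycles i j' := by subst h; simp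

lemma sc_congr {a b : ℤ} (h : a = b) (p : X.cycles a = X.cycles b)
    (q : X.X (b + 1) = X.X (a + 1)) :
    sc a = eqToHom p ≫ sc b ≫ eqToHom q := by subst h; simp

noncomputable def scc (i : ℤ) : X.cycles (i - 1) ⟶ X.X i :=
  sc (i - 1) ≫ eqToHom (by rw [sub_add_cancel])

noncomputable def ee (i : ℤ) : X.X i ⟶ X.X i :=
  𝟙 _ - X.toCycles i (i - 1) ≫ scc X sc i

variable (hsc : ∀ n : ℤ, m ≤ n → sc n ≫ X.toCycles (n + 1) n = 𝟙 _)

include hsc in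
lemma sc_d (n : ℤ) (hn : m ≤ n) : sc n ≫ X.d (n + 1) n = X.iCycles n := by
  rw [show X.d (n + 1) n = X.toCycles (n + 1) n ≫ X.iCycles n by simp, ← assoc, hsc n hn,
    id_comp]

lemma glue (n : ℤ) :
    X.toCycles (n + 1) (n + 1 - 1) ≫ scc X sc (n + 1) = X.toCycles (n + 1) n ≫ sc n := by
  rw [scc, sc_congr X sc (show n + 1 - 1 = n by omega)
    (by rw [show n + 1 - 1 = n by omega]) (by rw [show n + 1 - 1 = n by omega])]
  rw [← assoc, ← assoc, ← assoc, toCycles_congr X (n + 1) (show n + 1 - 1 = n by omega)]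
  rw [assoc, assoc, eqToHom_trans, eqToHom_refl, comp_id]

include hsc in
lemma scc_d (i : ℤ) (hi : m + 1 ≤ i) : scc X sc i ≫ X.d i (i - 1) = X.iCycles (i - 1) := by
  rw [scc, assoc, d_congr X (show i - 1 + 1 = i by omega)]
  exact sc_d X m sc hsc (i - 1) (by omega)

include hsc in
lemma ee_d (i : ℤ) (hi : m + 1 ≤ i) : ee X sc i ≫ X.d i (i - 1) = 0 := by
  rw [ee, Preadditive.sub_comp, id_comp, assoc, scc_d X m sc hsc i hi]
  simp

noncomputable def rr (i : ℤ) : X.X i ⟶ X.cycles i :=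
  if hi : m + 1 ≤ i then
    X.liftCycles (ee X sc i) (i - 1) (by simp) (ee_d X m sc hsc i hi)
  else 0

include hsc in
lemma rr_i (i : ℤ) (hi : m + 1 ≤ i) :
    rr X m sc hsc i ≫ X.iCycles i = ee X sc i := by
  rw [rr, dif_pos hi]
  simp

include hsc in
lemma d_rr (i : ℤ) (hi : m + 2 ≤ i) :
    X.d i (i - 1) ≫ rr X m sc hsc (i - 1) = X.toCycles i (i - 1) := by
  rw [← cancel_mono (X.iCycles (i - 1)), assoc, rr_i X m sc hsc (i - 1) (by omega)]
  rw [ee, Preadditive.comp_sub, comp_id, ← assoc (X.d i (i - 1)),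
    HomologicalComplex.d_toCycles]
  simp

noncomputable def homf (i j : ℤ) : X.X i ⟶ X.X j :=
  if hij : i + 1 = j ∧ m + 1 ≤ i then
    (-(rr X m sc hsc i ≫ sc i)) ≫ eqToHom (show X.X (i + 1) = X.X j by rw [hij.1])
  else 0

include hsc in
lemma homf_eval (i : ℤ) (hi : m + 1 ≤ i) :
    homf X m sc hsc i (i + 1) = -(rr X m sc hsc i ≫ sc i) := by
  rw [homf, dif_pos ⟨rfl, hi⟩, eqToHom_refl, comp_id]

noncomputable def htpy (hscm : sc m ≫ X.toCycles (m + 1) m = 𝟙 _) :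
    Homotopy (fQ X m ≫ gQ X m sc hscm) (𝟙 X) where
  hom := homf X m sc hsc
  zero := fun i j h => by
    rw [homf, dif_neg]
    intro hc
    exact h hc.1
  comm := by
    intro i
    have hrel1 : (ComplexShape.down ℤ).Rel i (i - 1) := by rw [down_rel]; omega
    have hrel2 : (ComplexShape.down ℤ).Rel (i + 1) i := rfl
    rw [dNext_eq _ hrel1, prevD_eq _ hrel2]
    show fQf X m i ≫ gQf X m sc i =
      X.d i (i - 1) ≫ homf X m sc hsc (i - 1) i + homf X m sc hsc i (i + 1) ≫ X.d (i + 1) i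
        + 𝟙 (X.X i)
    by_cases h1 : i ≤ m
    · rw [fQf_le X m h1, gQf_le X m sc h1]
      rw [homf, dif_neg (fun hc => by omega), homf, dif_neg (fun hc => by omega)]
      simp
    · by_cases h2 : i = m + 1
      · subst h2
        rw [fQf_top X m, gQf_top X m sc]
        rw [homf, dif_neg (fun hc => by omega), homf_eval X m sc hsc (m + 1) (by omega)]
        simp only [comp_zero, zero_add, Preadditive.neg_comp, assoc, Iso.inv_hom_id_assoc]
        rw [sc_d X m sc hsc (m + 1) (by omega), rr_i X m sc hsc (m + 1) (by omega), ee,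
          glue X sc m]
        abel
      · rw [fQf_zero X m (by omega), zero_comp]
        rw [homf_eval X m sc hsc i (by omega)]
        rw [homf, dif_pos ⟨(show i - 1 + 1 = i by omega), (by omega : m + 1 ≤ i - 1)⟩]
        have hscc : sc (i - 1) ≫ eqToHom (show X.X (i - 1 + 1) = X.X i by
            rw [show i - 1 + 1 = i by omega]) = scc X sc i := rfl
        simp only [Preadditive.neg_comp, Preadditive.comp_neg, assoc, comp_zero]
        rw [sc_d X m sc hsc i (by omega), rr_i X m sc hsc i (by omega), hscc,
          ← assoc (X.d i (i - 1)) (rr X m sc hsc (i - 1)) (scc X sc i),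
          d_rr X m sc hsc i (by omega), ee]
        abel

include hsc in
lemma gf_id (hscm : sc m ≫ X.toCycles (m + 1) m = 𝟙 _) :
    gQ X m sc hscm ≫ fQ X m = 𝟙 (Qcx X m) := by
  ext n
  show gQf X m sc n ≫ fQf X m n = 𝟙 (Qobj X m n)
  by_cases h1 : n ≤ m
  · rw [gQf_le X m sc h1, fQf_le X m h1, Iso.hom_inv_id]
  · by_cases h2 : n = m + 1
    · subst h2
      rw [gQf_top X m sc, fQf_top X m, assoc, ← assoc (sc m), hscm, id_comp, Iso.hom_inv_id]
    · exact (isZero_Qobj X m (by omega)).eq_of_src _ _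

end Htpy

end Stmt8Aux

open Stmt8Aux

/-- Let `E` be a full additive subcategory of an abelian category, closed under extensions
and direct summands, with enough projectives.  If every object of `E` has a finite
resolution by projectives of `E`, then every bounded-below, eventually `E`-acyclic complex
of projectives of `E` is homotopy equivalent to a bounded complex of projectives of `E`. -/
theorem stmt8 {A : Type u} [Category.{v} A] [Abelian A] (E : Set A)
    (hzero : ∀ Z : A, IsZero Z → Z ∈ E)
    (hadd : ∀ X Y : A, X ∈ E → Y ∈ E → (X ⊞ Y) ∈ E)
    (hext : ∀ (X' X X'' : A) (f : X' ⟶ X) (g : X ⟶ X'') (w : f ≫ g = 0),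
      (ShortComplex.mk f g w).ShortExact → X' ∈ E → X'' ∈ E → X ∈ E)
    (hsummand : ∀ (X Y : A) (i : X ⟶ Y) (r : Y ⟶ X), i ≫ r = 𝟙 X → Y ∈ E → X ∈ E)
    (henough : ∀ M ∈ E, ∃ (P K : A) (f : K ⟶ P) (g : P ⟶ M) (w : f ≫ g = 0),
      ProjectiveInSub E P ∧ K ∈ E ∧ (ShortComplex.mk f g w).ShortExact)
    (hfin : ∀ M ∈ E, ∃ n : ℕ, FinProjResLen E n M)
    (X : ChainComplex A ℤ)
    (hbb : ∃ b : ℤ, ∀ n < b, IsZero (X.X n))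
    (hprj : ∀ n, ProjectiveInSub E (X.X n))
    (heac : ∃ N : ℤ, ∀ n ≥ N, X.ExactAt n ∧ X.cycles n ∈ E) :
    ∃ Q : ChainComplex A ℤ,
      (∀ n, ProjectiveInSub E (Q.X n)) ∧
      (∃ a b : ℤ, ∀ n, (n < a ∨ b < n) → IsZero (Q.X n)) ∧
      Nonempty (HomotopyEquiv X Q) := by
  obtain ⟨b, hb⟩ := hbb
  obtain ⟨N, hN⟩ := heac
  -- descent: find m ≥ N with projective cycles
  have descent : ∀ (d : ℕ) (n : ℤ), N ≤ n → FinProjResLen E d (X.cycles n) →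
      ∃ m, N ≤ m ∧ ProjectiveInSub E (X.cycles m) := by
    intro d
    induction d with
    | zero => exact fun n hn h => ⟨n, hn, h⟩
    | succ d ih =>
      intro n hn h
      have hker : FinProjResLen E d (X.cycles (n + 1)) :=
        syzygy hzero hadd hext hsummand henough d (X.iCycles (n + 1)) (X.toCycles (n + 1) n)
          (w_cycles X n) (ses_cycles X (hN n hn).1) (hprj (n + 1))
          ((hN (n + 1) (by omega)).2) h
      exact ih (n + 1) (by omega) hker
  obtain ⟨d0, hd0⟩ := hfin _ (hN N (le_refl N)).2
  obtain ⟨m, hmN, hm⟩ := descent d0 N (le_refl N) hd0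
  -- all cycles above m are projective in E
  have hup : ∀ k : ℕ, ProjectiveInSub E (X.cycles (m + k)) := by
    intro k
    induction k with
    | zero => simpa using hm
    | succ k ih =>
      have hse := ses_cycles X (hN (m + k) (by omega)).1
      obtain ⟨spl⟩ := ses_splitting _ _ _ hse ih ((hN (m + k + 1) (by omega)).2)
        (hprj (m + k + 1)).1
      have hpr := proj_of_retract hsummand (X.iCycles (m + k + 1)) spl.r spl.f_r
        (hprj (m + k + 1))
      have hidx : m + ((k + 1 : ℕ) : ℤ) = m + k + 1 := by push_cast; ring
      rw [hidx]
      exact hpr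
  have hallproj : ∀ n : ℤ, m ≤ n → ProjectiveInSub E (X.cycles n) := by
    intro n hn
    have h := hup (n - m).toNat
    rw [show m + (((n - m).toNat : ℕ) : ℤ) = n by omega] at h
    exact h
  -- choose sections
  have hsecex : ∀ n : ℤ, ∃ s : X.cycles n ⟶ X.X (n + 1),
      m ≤ n → s ≫ X.toCycles (n + 1) n = 𝟙 _ := by
    intro n
    by_cases hn : m ≤ n
    · obtain ⟨l, hl⟩ := (hallproj n hn).2 _ _ _ (X.iCycles (n + 1)) (X.toCycles (n + 1) n)
        (w_cycles X n) ((hN (n + 1) (by omega)).2) (hprj (n + 1)).1 ((hN n (by omega)).2)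
        (ses_cycles X (hN n (by omega)).1) (𝟙 _)
      exact ⟨l, fun _ => hl⟩
    · exact ⟨0, fun h => absurd h hn⟩
  choose sc hsc using hsecex
  have hscm : sc m ≫ X.toCycles (m + 1) m = 𝟙 _ := hsc m (le_refl m)
  refine ⟨Qcx X m, ?_, ⟨min b (m + 1), m + 1, ?_⟩, ⟨{
      hom := fQ X m
      inv := gQ X m sc hscm
      homotopyHomInvId := htpy X m sc hsc hscm
      homotopyInvHomId := Homotopy.ofEq (gf_id X m sc hsc hscm) }⟩⟩
  · intro n
    show ProjectiveInSub E (Qobj X m n)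
    by_cases h1 : n ≤ m
    · exact proj_of_iso hsummand (isoX X m h1).symm (hprj n)
    · by_cases h2 : n = m + 1
      · subst h2
        exact proj_of_iso hsummand (isoZ X m).symm (hallproj m (le_refl m))
      · exact proj_zero hzero (isZero_Qobj X m (by omega))
  · intro n hn
    show IsZero (Qobj X m n)
    rcases hn with hn | hn
    · have h1 : n ≤ m := by omega
      exact (hb n (by omega)).of_iso (isoX X m h1)
    · exact isZero_Qobj X m hn
end
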